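/- The function Q(x) = 3^{1/4} / sqrt(cosh(2x)) satisfies the ordinary differential equation Q'' - Q + |Q|^4 Q = 0 on the real line. -/

import Mathlib

/-- The ground state `Q(x) = 3^{1/4} / √(cosh 2x)` solves `Q'' - Q + |Q|⁴ Q = 0` on ℝ. -/
theorem ground_state_solves_ode
    (Q : ℝ → ℝ)
    (hQ : Q = fun x : ℝ => (3 : ℝ) ^ ((1 : ℝ) / 4) / Real.sqrt (Real.cosh (2 * x))) :
    ∀ x : ℝ, deriv (deriv Q) x - Q x + |Q x| ^ 4 * Q x = 0 := by
  set c : ℝ := (3 : ℝ) ^ ((1 : ℝ) / 4) with hc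
  have hc0 : 0 < c := Real.rpow_pos_of_pos (by norm_num) _
  have hch : ∀ x : ℝ, 0 < Real.cosh (2 * x) := fun x => Real.cosh_pos (2*x)
  have hQ2 : Q = fun x : ℝ => c * Real.cosh (2 * x) ^ (-(1 : ℝ) / 2) := by
    funext x
    rw [hQ]
    simp only
    rw [Real.sqrt_eq_rpow, div_eq_mul_inv, ← Real.rpow_neg (hch x).le]
    norm_num
  have hQ' : ∀ x : ℝ, HasDerivAt Q
      (-c * Real.sinh (2 * x) * Real.cosh (2 * x) ^ (-(3 : ℝ) / 2)) x := by
    intro x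
    have h1 : HasDerivAt (fun x : ℝ => 2 * x) 2 x := by
      simpa using (hasDerivAt_id x).const_mul 2
    have h2 : HasDerivAt (fun x : ℝ => Real.cosh (2 * x)) (Real.sinh (2 * x) * 2) x := h1.cosh
    have h3 := (h2.rpow_const (p := -(1 : ℝ) / 2) (Or.inl (hch x).ne')).const_mul c
    rw [hQ2]
    refine h3.congr_deriv ?_
    rw [show (-(1 : ℝ) / 2 - 1) = -(3 : ℝ) / 2 by norm_num]
    ring
  have hdQ : deriv Q = fun x : ℝ =>
      -c * Real.sinh (2 * x) * Real.cosh (2 * x) ^ (-(3 : ℝ) / 2) :=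
    funext fun x => (hQ' x).deriv
  intro x
  have h1 : HasDerivAt (fun x : ℝ => 2 * x) 2 x := by
    simpa using (hasDerivAt_id x).const_mul 2
  have h2 : HasDerivAt (fun x : ℝ => Real.cosh (2 * x)) (Real.sinh (2 * x) * 2) x := h1.cosh
  have hA : HasDerivAt (fun x : ℝ => -c * Real.sinh (2 * x))
      (-c * (Real.cosh (2 * x) * 2)) x := h1.sinh.const_mul (-c)
  have hB : HasDerivAt (fun x : ℝ => Real.cosh (2 * x) ^ (-(3 : ℝ) / 2))
      (Real.sinh (2 * x) * 2 * (-(3 : ℝ) / 2) * Real.cosh (2 * x) ^ (-(3 : ℝ) / 2 - 1)) x :=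
    h2.rpow_const (Or.inl (hch x).ne')
  have hQ'' : deriv (deriv Q) x =
      -c * (Real.cosh (2 * x) * 2) * Real.cosh (2 * x) ^ (-(3 : ℝ) / 2) +
      -c * Real.sinh (2 * x) *
        (Real.sinh (2 * x) * 2 * (-(3 : ℝ) / 2) * Real.cosh (2 * x) ^ (-(3 : ℝ) / 2 - 1)) := by
    rw [hdQ]
    exact (hA.mul hB).deriv
  set h : ℝ := Real.cosh (2 * x) with hh
  set s : ℝ := Real.sinh (2 * x) with hs
  set p : ℝ := h ^ (-(5 : ℝ) / 2) with hp
  have hpos : (0 : ℝ) < h := hch x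
  have e1 : h ^ (-(1 : ℝ) / 2) = h ^ 2 * p := by
    rw [hp, ← Real.rpow_natCast h 2, ← Real.rpow_add hpos]
    norm_num
  have e2 : h ^ (-(3 : ℝ) / 2) = h * p := by
    rw [hp, show (-(3 : ℝ) / 2) = 1 + -(5 : ℝ) / 2 by norm_num, Real.rpow_add hpos,
      Real.rpow_one]
  have e3 : h ^ (-(3 : ℝ) / 2 - 1) = p := by
    rw [hp]; norm_num
  have hQx : Q x = c * (h ^ 2 * p) := by rw [hQ2]; simp only; rw [e1]
  have hQxpos : 0 < Q x := by
    rw [hQ2]; exact mul_pos hc0 (Real.rpow_pos_of_pos hpos _)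
  have eQ5 : |Q x| ^ 4 * Q x = 3 * c * p := by
    rw [abs_of_pos hQxpos, ← pow_succ, hQ2]
    simp only
    rw [mul_pow, ← Real.rpow_natCast (h ^ (-(1 : ℝ) / 2)) 5, ← Real.rpow_mul hpos.le,
      ← Real.rpow_natCast c 5, hc, ← Real.rpow_mul (by norm_num : (0:ℝ) ≤ 3)]
    rw [show ((1 : ℝ) / 4 * (5 : ℕ)) = 1 + 1 / 4 by push_cast; norm_num,
      Real.rpow_add (by norm_num : (0:ℝ) < 3), Real.rpow_one]
    rw [hp]
    push_cast
    norm_num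
  have e5 : h ^ 2 - s ^ 2 = 1 := Real.cosh_sq_sub_sinh_sq (2 * x)
  rw [hQ'', eQ5, hQx, e2, e3]
  nlinarith [e5, sq_nonneg (c * p)]
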